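/- A finite weighted tree T=(V,E,w) with w : V → ℕ admits a w-Hamiltonian cycle if and only if w(v) ≥ deg(v) for all v ∈ V. -/

import Mathlib

open SimpleGraph

section Helpers

variable {V : Type*}

lemma closed_start_mem_tail {G : SimpleGraph V} {u : V} (c : G.Walk u u)
    (h : c.support.tail ≠ []) : u ∈ c.support.tail := by
  obtain ⟨t, ts, htail⟩ := List.exists_cons_of_ne_nil h
  have h4 : c.support.getLast? = some u := by
    rw [List.getLast?_eq_getLast_of_ne_nil c.support_ne_nil, c.getLast_support]
  rw [c.support_eq_cons, htail, List.getLast?_cons_cons] at h4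
  obtain ⟨hne', heq⟩ := List.mem_getLast?_eq_getLast (Option.mem_def.mpr h4)
  rw [htail, heq]
  exact List.getLast_mem hne'

lemma count_tail_eq_count_dropLast [DecidableEq V] {G : SimpleGraph V} {u : V}
    (c : G.Walk u u) (x : V) :
    c.support.tail.count x = c.support.dropLast.count x := by
  have hne := c.support_ne_nil
  have h2 : c.support.dropLast ++ [u] = c.support := by
    conv_rhs => rw [← List.dropLast_append_getLast hne]
    rw [c.getLast_support]
  have h1 : c.support = u :: c.support.tail := c.support_eq_cons
  have h3 := congrArg (List.count x) (h2.trans h1)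
  simp only [List.count_append, List.count_cons, List.count_nil] at h3
  by_cases hx : u = x <;> simp [hx] at h3 <;> omega

lemma dart_mem_darts [DecidableEq V] {G : SimpleGraph V} (hT : G.IsTree) {v x : V}
    (h : G.Adj v x) (c : G.Walk v v) (hx : x ∈ c.support) :
    (⟨(v, x), h⟩ : G.Dart) ∈ c.darts := by
  set q := c.takeUntil x hx with hq
  have hsingle : (Walk.cons h Walk.nil : G.Walk v x).IsPath := by
    rw [Walk.cons_isPath_iff]
    simp [h.ne]
  have hqb : q.bypass = Walk.cons h Walk.nil :=
    (hT.existsUnique_path v x).unique q.bypass_isPath hsingle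
  have hmem : (⟨(v, x), h⟩ : G.Dart) ∈ q.bypass.darts := by
    rw [hqb]; simp [Walk.darts_cons]
  exact c.darts_takeUntil_subset hx (q.darts_bypass_subset hmem)

lemma degree_le_count [Fintype V] [DecidableEq V] {G : SimpleGraph V} [DecidableRel G.Adj]
    (hT : G.IsTree) {u : V} (π : G.Walk u u) (hcov : ∀ x, x ∈ π.support) (v : V) :
    G.degree v ≤ π.support.tail.count v := by
  have hv : v ∈ π.support := hcov v
  set ρ := π.rotate v hv with hρ
  have hperm : ρ.support.tail.Perm π.support.tail := (π.support_rotate v hv).perm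
  rw [← hperm.count_eq, count_tail_eq_count_dropLast]
  have hdart : ∀ x ∈ G.neighborFinset v, ∃ d ∈ ρ.darts, d.fst = v ∧ d.snd = x := by
    intro x hx
    rw [mem_neighborFinset] at hx
    have hxs : x ∈ ρ.support := by
      have hx' : x ∈ π.support := hcov x
      rw [π.support_eq_cons] at hx'
      rcases List.mem_cons.mp hx' with rfl | htl
      · by_cases hnil : π.support.tail = []
        · exfalso
          have hvs := hcov v
          rw [π.support_eq_cons, hnil] at hvs
          simp only [List.mem_singleton] at hvs
          exact G.loopless.irrefl x (hvs ▸ hx)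
        · exact List.mem_of_mem_tail ((hperm.mem_iff).mpr (closed_start_mem_tail π hnil))
      · exact List.mem_of_mem_tail ((hperm.mem_iff).mpr htl)
    exact ⟨⟨(v, x), hx⟩, dart_mem_darts hT hx ρ hxs, rfl, rfl⟩
  have hsub : G.neighborFinset v ⊆
      ((ρ.darts.filter fun d => d.fst == v).map fun d => d.snd).toFinset := by
    intro x hx
    obtain ⟨d, hd, h1, h2⟩ := hdart x hx
    rw [List.mem_toFinset, List.mem_map]
    exact ⟨d, List.mem_filter.mpr ⟨hd, by simp [h1]⟩, h2⟩
  calc G.degree v ≤ _ := Finset.card_le_card hsub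
    _ ≤ ((ρ.darts.filter fun d => d.fst == v).map fun d => d.snd).length :=
        List.toFinset_card_le _
    _ = (ρ.darts.filter fun d => d.fst == v).length := List.length_map _
    _ = ρ.darts.countP (fun d => d.fst == v) := List.countP_eq_length_filter.symm
    _ = (ρ.darts.map (·.fst)).count v := by
        rw [List.count, List.countP_map]; rfl
    _ = ρ.support.dropLast.count v := by rw [ρ.map_fst_darts]

end Helpers

section Backward

universe u

variable {V : Type u}

lemma my_degree_pos [Fintype V] {G : SimpleGraph V} [DecidableRel G.Adj]
    (hc : G.Connected) (h2 : 2 ≤ Fintype.card V) (v : V) : 0 < G.degree v := by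
  obtain ⟨w, hw⟩ := Fintype.exists_ne_of_one_lt_card (by omega) v
  obtain ⟨q⟩ := hc.preconnected v w
  obtain ⟨x, hadj, -, -⟩ := Walk.exists_eq_cons_of_ne (Ne.symm hw) q
  exact (SimpleGraph.degree_pos_iff_exists_adj G v).mpr ⟨x, hadj⟩

lemma my_exists_leaf [Fintype V] [DecidableEq V] {G : SimpleGraph V} [DecidableRel G.Adj]
    (hT : G.IsTree) (h2 : 2 ≤ Fintype.card V) : ∃ ℓ, G.degree ℓ = 1 := by
  by_contra hc
  push_neg at hc
  have hge : ∀ v, 2 ≤ G.degree v := fun v => by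
    have h1 := my_degree_pos hT.isConnected h2 v
    have h2 := hc v
    omega
  have hsum := G.sum_degrees_eq_twice_card_edges
  have hcard := hT.card_edgeFinset
  have hle : 2 * Fintype.card V ≤ ∑ v, G.degree v := by
    calc 2 * Fintype.card V = ∑ _v : V, 2 := by
          rw [Finset.sum_const, Finset.card_univ, smul_eq_mul, mul_comm]
      _ ≤ ∑ v, G.degree v := Finset.sum_le_sum fun v _ => hge v
  omega

lemma reachable_induce {G : SimpleGraph V} {s : Set V} :
    ∀ {a b : V} (q : G.Walk a b), (∀ x ∈ q.support, x ∈ s) →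
      ∀ (ha : a ∈ s) (hb : b ∈ s), (G.induce s).Reachable ⟨a, ha⟩ ⟨b, hb⟩ := by
  intro a b q
  induction q with
  | nil => exact fun _ _ _ => Reachable.refl _
  | @cons a c b h q ih =>
    intro hsup ha hb
    have hc : c ∈ s := hsup c (by simp [Walk.support_cons])
    have hstep : (G.induce s).Adj ⟨a, ha⟩ ⟨c, hc⟩ := h
    exact (hstep.reachable).trans
      (ih (fun x hx => hsup x (by simp [Walk.support_cons, hx])) hc hb)

lemma exists_cover : ∀ (n : ℕ) {V : Type u} [Fintype V] [DecidableEq V]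
    (T : SimpleGraph V) [DecidableRel T.Adj], Fintype.card V = n → T.IsTree →
    ∃ (u : V) (π : T.Walk u u), (∀ x, x ∈ π.support) ∧
      ∀ x, π.support.tail.count x = T.degree x := by
  intro n
  induction n using Nat.strong_induction_on with
  | _ n IH =>
  intro V _ _ T _ hcard hT
  by_cases h1 : Fintype.card V ≤ 1
  · have hcard1 : Fintype.card V = 1 :=
      le_antisymm h1 (@Fintype.card_pos _ _ hT.isConnected.nonempty)
    obtain ⟨u, hu⟩ := Fintype.card_eq_one_iff.mp hcard1
    refine ⟨u, Walk.nil, ?_, ?_⟩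
    · intro x; rw [hu x]; simp
    · intro x
      have hdeg : T.neighborFinset x = ∅ := by
        ext y
        simp only [mem_neighborFinset, Finset.notMem_empty, iff_false]
        intro hadj
        exact hadj.ne ((hu x).trans (hu y).symm)
      have : T.degree x = 0 := by rw [← card_neighborFinset_eq_degree, hdeg, Finset.card_empty]
      simp [this]
  · push_neg at h1
    have h2 : 2 ≤ Fintype.card V := h1
    obtain ⟨ℓ, hℓ⟩ := my_exists_leaf hT h2
    have hℓcard : (T.neighborFinset ℓ).card = 1 := by
      rwa [card_neighborFinset_eq_degree]
    obtain ⟨p, hp⟩ := Finset.card_eq_one.mp hℓcard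
    have hadjℓp : T.Adj ℓ p := by
      rw [← mem_neighborFinset, hp]; exact Finset.mem_singleton_self p
    have hpℓ : p ≠ ℓ := fun h => T.loopless.irrefl ℓ (h ▸ hadjℓp)
    have hnbr : ∀ y, T.Adj ℓ y → y = p := fun y hy => by
      have hmem : y ∈ T.neighborFinset ℓ := (mem_neighborFinset _ _ _).mpr hy
      rw [hp] at hmem
      simpa using hmem
    set s : Set V := {x | x ≠ ℓ} with hs
    haveI hdecs : DecidablePred (· ∈ s) := fun x => decidable_of_iff (x ≠ ℓ) Iff.rfl
    haveI : Fintype ↥s := Subtype.fintype _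
    set T' := T.induce s with hT'def
    haveI : DecidableRel T'.Adj := fun a b => ‹DecidableRel T.Adj› a b
    have hcards : Fintype.card ↥s = n - 1 := by
      have hcc : Fintype.card ↥s = Fintype.card V - 1 := by
        have := Fintype.card_subtype_compl (fun x : V => x = ℓ)
        rw [Fintype.card_subtype_eq] at this
        convert this using 2
        rfl
      omega
    -- T' is a tree
    have htree' : T'.IsTree := by
      constructor
      · rw [connected_iff]
        refine ⟨?_, ⟨⟨p, hpℓ⟩⟩⟩
        rintro ⟨a, ha⟩ ⟨b, hb⟩
        obtain ⟨P, hP, -⟩ := hT.existsUnique_path a b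
        have hℓP : ℓ ∉ P.support := by
          intro hmem
          have hane : a ≠ ℓ := ha
          have hbne : b ≠ ℓ := hb
          have hspec := (P.take_spec hmem).symm
          set P1 := P.takeUntil ℓ hmem with hP1
          set P2 := P.dropUntil ℓ hmem with hP2
          have hnodup : (P1.support ++ P2.support.tail).Nodup := by
            rw [← Walk.support_append, ← hspec]
            exact hP.support_nodup
          have hdisj := (List.nodup_append.mp hnodup).2.2
          obtain ⟨c1, hadj1, q1, hq1⟩ :=
            Walk.exists_eq_cons_of_ne (Ne.symm hane) P1.reverse
          have hc1 : c1 ∈ P1.support := by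
            have hm : c1 ∈ P1.reverse.support := by
              rw [hq1, Walk.support_cons]
              exact List.mem_cons_of_mem _ q1.start_mem_support
            rwa [Walk.support_reverse, List.mem_reverse] at hm
          obtain ⟨c2, hadj2, q2, hq2⟩ :=
            Walk.exists_eq_cons_of_ne (Ne.symm hbne) P2
          have hc2 : c2 ∈ P2.support.tail := by
            rw [hq2, Walk.support_cons, List.tail_cons]
            exact q2.start_mem_support
          rw [hnbr c1 hadj1] at hc1
          rw [hnbr c2 hadj2] at hc2
          exact hdisj _ hc1 _ hc2 rfl
        exact reachable_induce P (fun x hx => by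
          intro hxℓ
          exact hℓP (hxℓ ▸ hx)) ha hb
      · intro a c hc
        exact hT.IsAcyclic (c.map (Embedding.induce s).toHom)
          ((Walk.map_isCycle_iff_of_injective Subtype.val_injective).mpr hc)
    -- degree relations
    have hdegree : ∀ (x : ↥s), T'.degree x = ((T.neighborFinset (x : V)).erase ℓ).card := by
      intro x
      rw [← card_neighborFinset_eq_degree]
      refine Finset.card_bij (fun y _ => (y : V)) ?_ ?_ ?_
      · intro y hy
        rw [mem_neighborFinset] at hy
        rw [Finset.mem_erase, mem_neighborFinset]
        exact ⟨y.2, hy⟩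
      · intro y1 _ y2 _ h
        exact Subtype.ext h
      · intro z hz
        rw [Finset.mem_erase, mem_neighborFinset] at hz
        exact ⟨⟨z, hz.1⟩, (mem_neighborFinset _ _ _).mpr hz.2, rfl⟩
    have hdeg_ne : ∀ (x : ↥s), (x : V) ≠ p → T'.degree x = T.degree (x : V) := by
      intro x hx
      rw [hdegree x, Finset.erase_eq_of_notMem, card_neighborFinset_eq_degree]
      intro hmem
      rw [mem_neighborFinset] at hmem
      exact hx (hnbr _ hmem.symm)
    have hdeg_p : T'.degree ⟨p, hpℓ⟩ + 1 = T.degree p := by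
      rw [hdegree]
      show ((T.neighborFinset p).erase ℓ).card + 1 = T.degree p
      rw [Finset.card_erase_of_mem (by rw [mem_neighborFinset]; exact hadjℓp.symm)]
      have h1 : 1 ≤ T.degree p := (SimpleGraph.degree_pos_iff_exists_adj T p).mpr ⟨ℓ, hadjℓp.symm⟩
      have h2 : T.degree p = (T.neighborFinset p).card := (card_neighborFinset_eq_degree _ _).symm
      omega
    -- induction hypothesis
    obtain ⟨u', π', hcov', hcnt'⟩ := IH (n - 1) (by omega) T' hcards htree'
    set f := (Embedding.induce s (G := T)).toHom with hf
    set π0 := π'.map f with hπ0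
    have hpmem : p ∈ π0.support := by
      rw [hπ0, Walk.support_map]
      exact List.mem_map.mpr ⟨⟨p, hpℓ⟩, hcov' _, rfl⟩
    set ρ := π0.rotate p hpmem with hρ
    have hrperm : ρ.support.tail.Perm π0.support.tail := (π0.support_rotate p hpmem).perm
    have hcount0 : ∀ x : V, π0.support.tail.count x =
        if hx : x ∈ s then T'.degree ⟨x, hx⟩ else 0 := by
      intro x
      have htt : π0.support.tail = π'.support.tail.map Subtype.val := by
        rw [hπ0, Walk.support_map, ← List.map_tail]
        rfl
      rw [htt]
      by_cases hx : x ∈ s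
      · rw [dif_pos hx, ← hcnt' ⟨x, hx⟩]
        convert List.count_map_of_injective _ _ Subtype.val_injective ⟨x, hx⟩
      · rw [dif_neg hx, List.count_eq_zero]
        intro hmem
        obtain ⟨y, -, hy⟩ := List.mem_map.mp hmem
        exact hx (hy ▸ y.2)
    have hρcount : ∀ x : V, ρ.support.count x =
        (if p = x then 1 else 0) + π0.support.tail.count x := by
      intro x
      conv_lhs => rw [ρ.support_eq_cons]
      rw [List.count_cons, hrperm.count_eq]
      by_cases hx : p = x <;> first | (simp [hx]; omega) | simp [hx]
    have hcounts : ∀ x : V, (ℓ :: ρ.support).count x = T.degree x := by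
      intro x
      have e1 : (ℓ :: ρ.support).count x = ρ.support.count x + (if x = ℓ then 1 else 0) := by
        by_cases hxl : x = ℓ <;> simp [List.count_cons, hxl] <;> exact fun h => hxl h.symm
      rw [e1, hρcount x, hcount0 x]
      by_cases hxℓ : x = ℓ
      · have hns : x ∉ s := fun hc => hc hxℓ
        rw [dif_neg hns, if_pos hxℓ, if_neg (hxℓ ▸ hpℓ : p ≠ x)]
        subst hxℓ
        omega
      · have hxs : x ∈ s := hxℓ
        rw [dif_pos hxs, if_neg hxℓ]
        by_cases hxp : x = p
        · subst hxp
          rw [if_pos rfl, show (⟨x, hxs⟩ : ↥s) = ⟨x, hpℓ⟩ from rfl]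
          omega
        · rw [if_neg (fun h => hxp h.symm), hdeg_ne ⟨x, hxs⟩ hxp]
          show 0 + T.degree x = T.degree x
          omega
    refine ⟨p, Walk.cons hadjℓp.symm (Walk.cons hadjℓp ρ), ?_, ?_⟩
    · intro x
      have hpos : 0 < (ℓ :: ρ.support).count x := by
        rw [hcounts]
        exact my_degree_pos hT.isConnected h2 x
      have hmem : x ∈ ℓ :: ρ.support := List.count_pos_iff.mp hpos
      simp only [Walk.support_cons]
      exact List.mem_cons_of_mem _ hmem
    · intro x
      simpa only [Walk.support_cons, List.tail_cons] using hcounts x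

end Backward

/-- A `w`-Hamiltonian cycle: a closed walk visiting every vertex, with each vertex
`x` visited at most `w x` times (the start vertex counted once). -/
def IsWHamiltonianCycle {V : Type*} [DecidableEq V] (G : SimpleGraph V) (w : V → ℕ)
    {u : V} (π : G.Walk u u) : Prop :=
  (∀ x : V, x ∈ π.support) ∧ ∀ x : V, π.support.tail.count x ≤ w x

/-- A finite weighted tree admits a `w`-Hamiltonian cycle iff every vertex `v`
satisfies `deg v ≤ w v`. -/
theorem weighted_tree_hamiltonian_iff {V : Type*} [Fintype V] [DecidableEq V]
    (T : SimpleGraph V) [DecidableRel T.Adj] (hT : T.IsTree) (w : V → ℕ) :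
    (∃ (u : V) (π : T.Walk u u), IsWHamiltonianCycle T w π) ↔
      ∀ v : V, T.degree v ≤ w v := by
  constructor
  · rintro ⟨u, π, hcov, hcnt⟩ v
    exact le_trans (degree_le_count hT π hcov v) (hcnt v)
  · intro hw
    obtain ⟨u, π, hcov, hcnt⟩ := exists_cover (Fintype.card V) T rfl hT
    exact ⟨u, π, hcov, fun x => (hcnt x).le.trans (hw x)⟩
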